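/- Let C₀ ∈ ℂ^r have Euclidean norm 1, let Φ₀ = (φ₁,…,φ_K) be an orthonormal system in L²(Ω), assume Γ(C₀) is invertible, and set Ψ₀ = π(C₀,Φ₀). If δC = (δc_σ) ∈ ℂ^r and δφ₁,…,δφ_K ∈ L²(Ω) satisfy ⟨δφ_k, φ_m⟩ = 0 for all 1 ≤ k,m ≤ K and Σ_σ δc_σ (Φ₀)_σ + (1/N) Σ_{k=1}^K (∂Ψ₀/∂φ_k)[δφ_k] = 0 in L²(Ω^N), then δC = 0 and δφ_k = 0 for every k. -/

import Mathlib

open MeasureTheory Complex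
open scoped BigOperators ComplexConjugate ENNReal

noncomputable section

abbrev E3 : Type := EuclideanSpace ℝ (Fin 3)

def mOm (Ω : Set E3) : Measure E3 := MeasureTheory.volume.restrict Ω

def mN (Ω : Set E3) (n : ℕ) : Measure (Fin n → E3) := Measure.pi fun _ => mOm Ω

def ip2 (Ω : Set E3) (f g : E3 → ℂ) : ℂ := ∫ x, f x * conj (g x) ∂ (mOm Ω)

def ipN (Ω : Set E3) (n : ℕ) (f g : (Fin n → E3) → ℂ) : ℂ :=
  ∫ x, f x * conj (g x) ∂ (mN Ω n)

def slater (n : ℕ) (φ : Fin n → E3 → ℂ) : (Fin n → E3) → ℂ := fun x =>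
  ((Real.sqrt (Nat.factorial n) : ℂ))⁻¹ * Matrix.det (Matrix.of fun i j : Fin n => φ i (x j))

def SigmaNK (N K : ℕ) : Type := {s : Finset (Fin K) // s.card = N}

instance (N K : ℕ) : Fintype (SigmaNK N K) :=
  inferInstanceAs (Fintype {s : Finset (Fin K) // s.card = N})

instance (N K : ℕ) : DecidableEq (SigmaNK N K) :=
  inferInstanceAs (DecidableEq {s : Finset (Fin K) // s.card = N})

def embOf {N K : ℕ} (σ : SigmaNK N K) : Fin N → Fin K := fun i => σ.1.orderEmbOfFin σ.2 i

def slaterSel (N K : ℕ) (Φ : Fin K → E3 → ℂ) (σ : SigmaNK N K) : (Fin N → E3) → ℂ :=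
  slater N fun i => Φ (embOf σ i)

def mc (N K : ℕ) (C : SigmaNK N K → ℂ) (Φ : Fin K → E3 → ℂ) : (Fin N → E3) → ℂ :=
  fun x => ∑ σ : SigmaNK N K, C σ * slaterSel N K Φ σ x

def posIn {K : ℕ} (s : Finset (Fin K)) (i : Fin K) : ℕ :=
  (Finset.sort s (· ≤ ·)).idxOf i

def gamma1 (N K : ℕ) (C : SigmaNK N K → ℂ) (i j : Fin K) : ℂ :=
  ∑ σ : SigmaNK N K, ∑ τ : SigmaNK N K,
    if i ∈ σ.1 ∧ j ∈ τ.1 ∧ σ.1.erase i = τ.1.erase j then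
      (-1 : ℂ) ^ (posIn σ.1 i + posIn τ.1 j) * C σ * conj (C τ)
    else 0

def sgn2 {K : ℕ} (s : Finset (Fin K)) (i j : Fin K) : ℂ :=
  (if i = j then 0 else if j < i then 1 else -1) *
    (-1 : ℂ) ^ (posIn s i + posIn s j)

def gamma2 (N K : ℕ) (C : SigmaNK N K → ℂ) (i j k l : Fin K) : ℂ :=
  (1 / 2 : ℂ) * ∑ σ : SigmaNK N K, ∑ τ : SigmaNK N K,
    if i ∈ σ.1 ∧ j ∈ σ.1 ∧ k ∈ τ.1 ∧ l ∈ τ.1 ∧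
        (σ.1.erase i).erase j = (τ.1.erase k).erase l then
      sgn2 σ.1 i j * sgn2 τ.1 k l * C σ * conj (C τ)
    else 0

def GammaM (N K : ℕ) (C : SigmaNK N K → ℂ) : Matrix (Fin K) (Fin K) ℂ :=
  Matrix.of fun i j => conj (gamma1 N K C i j)

def OrthoSys (Ω : Set E3) {K : ℕ} (Φ : Fin K → E3 → ℂ) : Prop :=
  (∀ k, MemLp (Φ k) 2 (mOm Ω)) ∧
  ∀ i j, ip2 Ω (Φ i) (Φ j) = if i = j then 1 else 0

def dPhi (Ω : Set E3) (n : ℕ) (Ξ : (Fin n → E3) → ℂ) (φ ζ : E3 → ℂ) :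
    (Fin n → E3) → ℂ := fun x =>
  ∑ i : Fin n, ζ (x i) * ∫ y, Ξ (Function.update x i y) * conj (φ y) ∂ (mOm Ω)

def gammaFun (Ω : Set E3) (N : ℕ) (Ψ : (Fin (N+1) → E3) → ℂ) (f : E3 → ℂ) : E3 → ℂ :=
  fun x => ((N : ℂ) + 1) *
    ∫ y, (∫ Z, Ψ (Fin.cons x Z) * conj (Ψ (Fin.cons y Z)) ∂ (mN Ω N)) * f y ∂ (mOm Ω)

set_option linter.unusedSectionVars false
set_option maxHeartbeats 2000000
open scoped Matrix

-- AUX SECTION 1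
section Aux1
variable {α : Type*} [MeasurableSpace α] {μ : Measure α} [SigmaFinite μ]

set_option maxHeartbeats 800000 in
theorem my_integrable_pi_prod {n : ℕ}
    {f : Fin n → α → ℂ} (hf : ∀ i, Integrable (f i) μ) :
    Integrable (fun (x : Fin n → α) ↦ ∏ i, f i (x i)) (Measure.pi fun _ => μ) := by
  induction n with
  | zero =>
    haveI : IsFiniteMeasure (Measure.pi fun _ : Fin 0 => μ) := ⟨by simp [Measure.pi_empty_univ]⟩
    simp [integrable_const_iff, Measure.pi_empty_univ]
  | succ n n_ih =>
      have := ((measurePreserving_piFinSuccAbove (fun _ : Fin (n+1) => μ) 0).symm)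
      rw [← this.integrable_comp_emb (MeasurableEquiv.measurableEmbedding _)]
      simp_rw [MeasurableEquiv.piFinSuccAbove_symm_apply, Fin.insertNthEquiv,
        Fin.prod_univ_succ, Fin.insertNth_zero]
      simp only [Fin.zero_succAbove, Function.comp_def, Fin.cons_zero, Fin.cons_succ]
      have h2 : Integrable (fun (x : Fin n → α) ↦ ∏ j, f (Fin.succ j) (x j))
          (Measure.pi fun _ => μ) := n_ih (fun i ↦ hf _)
      exact Integrable.mul_prod (hf 0) h2

theorem my_integral_pi_prod {n : ℕ} (f : Fin n → α → ℂ) :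
    ∫ x : Fin n → α, ∏ i, f i (x i) ∂(Measure.pi fun _ => μ) = ∏ i, ∫ x, f i x ∂μ := by
  induction n with
  | zero => simp [Measure.pi_empty_univ, measureReal_def]
  | succ n n_ih =>
      calc
        _ = ∫ x : α × (Fin n → α),
            f 0 x.1 * ∏ i : Fin n, f (Fin.succ i) (x.2 i) ∂(μ.prod (Measure.pi fun _ => μ)) := by
          rw [← ((measurePreserving_piFinSuccAbove
            (fun _ : Fin (n+1) => μ) 0).symm).integral_comp']
          congr 1; ext x
          rw [Fin.prod_univ_succ]
          simp [MeasurableEquiv.piFinSuccAbove_symm_apply, Fin.insertNthEquiv,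
            Fin.insertNth_zero, Fin.zero_succAbove]
        _ = (∫ x, f 0 x ∂μ) * ∏ i : Fin n, ∫ (x : α), f (Fin.succ i) x ∂μ := by
          rw [← n_ih, ← integral_prod_mul]
        _ = ∏ i, ∫ x, f i x ∂μ := by rw [Fin.prod_univ_succ]

theorem my_integrable_mul_conj {f g : α → ℂ} (hf : MemLp f 2 μ) (hg : MemLp g 2 μ) :
    Integrable (fun x => f x * conj (g x)) μ := by
  have h := L2.integrable_inner (𝕜 := ℂ) (hg.toLp g) (hf.toLp f)
  apply h.congr
  filter_upwards [hg.coeFn_toLp, hf.coeFn_toLp] with x h1 h2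
  simp [RCLike.inner_apply, h1, h2, mul_comm]

end Aux1

theorem ip2_conj_symm (Ω : Set E3) (f g : E3 → ℂ) : ip2 Ω g f = conj (ip2 Ω f g) := by
  rw [ip2, ip2, ← integral_conj]
  congr 1; ext x; simp [mul_comm]
set_option linter.unusedSectionVars false

def gram (Ω : Set E3) (n : ℕ) (f g : Fin n → E3 → ℂ) : Matrix (Fin n) (Fin n) ℂ :=
  Matrix.of fun a b => ip2 Ω (f a) (g b)

theorem slater_mul_conj (n : ℕ) (f g : Fin n → E3 → ℂ) (x : Fin n → E3) :
    slater n f x * conj (slater n g x) =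
      ∑ π : Equiv.Perm (Fin n), ∑ ρ : Equiv.Perm (Fin n),
        (((n.factorial : ℝ) : ℂ))⁻¹ * ((Equiv.Perm.sign π : ℤ) : ℂ) *
          ((Equiv.Perm.sign ρ : ℤ) : ℂ) *
          ∏ b, (f (π b) (x b) * conj (g (ρ b) (x b))) := by
  have hc : ((Real.sqrt (n.factorial) : ℂ))⁻¹ * conj ((Real.sqrt (n.factorial) : ℂ))⁻¹
      = (((n.factorial : ℝ) : ℂ))⁻¹ := by
    rw [← Complex.ofReal_inv, ← Complex.ofReal_inv, Complex.conj_ofReal,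
      ← Complex.ofReal_mul, ← mul_inv, Real.mul_self_sqrt (by positivity)]
  rw [slater, slater, Matrix.det_apply', Matrix.det_apply']
  rw [map_mul, mul_mul_mul_comm, hc, map_sum, Finset.sum_mul_sum]
  rw [Finset.mul_sum]
  refine Finset.sum_congr rfl fun π _ => ?_
  rw [Finset.mul_sum]
  refine Finset.sum_congr rfl fun ρ _ => ?_
  simp only [map_mul, map_prod, map_intCast, Matrix.of_apply]
  rw [Finset.prod_mul_distrib]
  push_cast
  ring
instance (Ω : Set E3) : SigmaFinite (mOm Ω) := by
  unfold mOm; infer_instance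

theorem slater_pair_integrable (Ω : Set E3) (n : ℕ) {f g : Fin n → E3 → ℂ}
    (hf : ∀ a, MemLp (f a) 2 (mOm Ω)) (hg : ∀ a, MemLp (g a) 2 (mOm Ω)) :
    Integrable (fun x => slater n f x * conj (slater n g x)) (mN Ω n) := by
  have hrw : (fun x : Fin n → E3 => slater n f x * conj (slater n g x)) =
      fun x => ∑ π : Equiv.Perm (Fin n), ∑ ρ : Equiv.Perm (Fin n),
        (((n.factorial : ℝ) : ℂ))⁻¹ * ((Equiv.Perm.sign π : ℤ) : ℂ) *
          ((Equiv.Perm.sign ρ : ℤ) : ℂ) *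
          ∏ b, (f (π b) (x b) * conj (g (ρ b) (x b))) :=
    funext fun x => slater_mul_conj n f g x
  rw [hrw]
  refine integrable_finset_sum _ fun π _ => integrable_finset_sum _ fun ρ _ => ?_
  exact (my_integrable_pi_prod (f := fun b => fun y => f (π b) y * conj (g (ρ b) y))
    (fun b => my_integrable_mul_conj (hf (π b)) (hg (ρ b)))).const_mul _

theorem my_perm_det (n : ℕ) (G : Matrix (Fin n) (Fin n) ℂ) :
    ∑ π : Equiv.Perm (Fin n), ∑ ρ : Equiv.Perm (Fin n),
      ((Equiv.Perm.sign π : ℤ) : ℂ) * ((Equiv.Perm.sign ρ : ℤ) : ℂ) * ∏ b, G (π b) (ρ b)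
      = (n.factorial : ℂ) * G.det := by
  have key : ∀ π : Equiv.Perm (Fin n),
      (∑ ρ : Equiv.Perm (Fin n),
        ((Equiv.Perm.sign π : ℤ) : ℂ) * ((Equiv.Perm.sign ρ : ℤ) : ℂ) * ∏ b, G (π b) (ρ b))
      = G.det := by
    intro π
    rw [← Equiv.sum_comp (Equiv.mulRight π)
      (fun ρ => ((Equiv.Perm.sign π : ℤ) : ℂ) * ((Equiv.Perm.sign ρ : ℤ) : ℂ)
        * ∏ b, G (π b) (ρ b))]
    have hdet := Matrix.det_transpose G
    rw [← hdet, Matrix.det_apply']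
    refine Finset.sum_congr rfl fun s _ => ?_
    have h1 : ∏ b, G (π b) ((Equiv.mulRight π s) b) = ∏ c, G c (s c) := by
      simpa using Equiv.prod_comp π (fun c => G c (s c))
    have hsq : ((Equiv.Perm.sign π : ℤ) : ℂ) * ((Equiv.Perm.sign π : ℤ) : ℂ) = 1 := by
      rcases Int.units_eq_one_or (Equiv.Perm.sign π) with h | h <;> simp [h]
    have h2 : ((Equiv.Perm.sign (Equiv.mulRight π s) : ℤ) : ℂ)
        = ((Equiv.Perm.sign s : ℤ) : ℂ) * ((Equiv.Perm.sign π : ℤ) : ℂ) := by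
      have hms : Equiv.mulRight π s = s * π := rfl
      rw [hms, map_mul]
      push_cast
      ring
    have h3 : ∀ i, G.transpose (s i) i = G i (s i) := fun i => rfl
    rw [h1, h2]
    simp only [h3]
    rw [mul_comm (((Equiv.Perm.sign s : ℤ) : ℂ)) _, mul_assoc, mul_assoc]
    rw [← mul_assoc ((( Equiv.Perm.sign π : ℤ) : ℂ)), hsq, one_mul]
  rw [Finset.sum_congr rfl fun π _ => key π, Finset.sum_const]
  simp [Finset.card_univ, Fintype.card_perm, nsmul_eq_mul]
set_option maxHeartbeats 2000000 in
theorem ipN_slater (Ω : Set E3) (n : ℕ) {f g : Fin n → E3 → ℂ}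
    (hf : ∀ a, MemLp (f a) 2 (mOm Ω)) (hg : ∀ a, MemLp (g a) 2 (mOm Ω)) :
    ipN Ω n (slater n f) (slater n g) = (gram Ω n f g).det := by
  rw [ipN]
  rw [integral_congr_ae (ae_of_all _ fun x => slater_mul_conj n f g x)]
  rw [integral_finset_sum _ (fun π _ => integrable_finset_sum _ (fun ρ _ =>
    (my_integrable_pi_prod (f := fun b => fun y => f (π b) y * conj (g (ρ b) y))
      (fun b => my_integrable_mul_conj (hf (π b)) (hg (ρ b)))).const_mul _))]
  have step : ∀ π : Equiv.Perm (Fin n),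
      (∫ x, ∑ ρ : Equiv.Perm (Fin n),
        (((n.factorial : ℝ) : ℂ))⁻¹ * ((Equiv.Perm.sign π : ℤ) : ℂ) *
          ((Equiv.Perm.sign ρ : ℤ) : ℂ) *
          ∏ b, (f (π b) (x b) * conj (g (ρ b) (x b))) ∂(mN Ω n))
      = ∑ ρ : Equiv.Perm (Fin n),
        (((n.factorial : ℝ) : ℂ))⁻¹ * ((Equiv.Perm.sign π : ℤ) : ℂ) *
          ((Equiv.Perm.sign ρ : ℤ) : ℂ) *
          ∏ b, gram Ω n f g (π b) (ρ b) := by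
    intro π
    rw [integral_finset_sum _ (fun ρ _ =>
      (my_integrable_pi_prod (f := fun b => fun y => f (π b) y * conj (g (ρ b) y))
        (fun b => my_integrable_mul_conj (hf (π b)) (hg (ρ b)))).const_mul _)]
    refine Finset.sum_congr rfl fun ρ _ => ?_
    rw [MeasureTheory.integral_const_mul]
    congr 1
    exact my_integral_pi_prod (μ := mOm Ω) (fun b => fun y => f (π b) y * conj (g (ρ b) y))
  rw [Finset.sum_congr rfl fun π _ => step π]
  have collect : ∑ π : Equiv.Perm (Fin n), ∑ ρ : Equiv.Perm (Fin n),
      (((n.factorial : ℝ) : ℂ))⁻¹ * ((Equiv.Perm.sign π : ℤ) : ℂ) *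
        ((Equiv.Perm.sign ρ : ℤ) : ℂ) * ∏ b, gram Ω n f g (π b) (ρ b)
      = (((n.factorial : ℝ) : ℂ))⁻¹ * ((n.factorial : ℂ) * (gram Ω n f g).det) := by
    rw [← my_perm_det n (gram Ω n f g), Finset.mul_sum]
    refine Finset.sum_congr rfl fun π _ => ?_
    rw [Finset.mul_sum]
    exact Finset.sum_congr rfl fun ρ _ => by ring
  rw [collect]
  have hcast : ((n.factorial : ℝ) : ℂ) = (n.factorial : ℂ) := by push_cast; ring
  have hfac : ((n.factorial : ℝ) : ℂ) ≠ 0 := by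
    rw [hcast]
    exact Nat.cast_ne_zero.mpr n.factorial_ne_zero
  rw [← mul_assoc, hcast, inv_mul_cancel₀ (hcast ▸ hfac), one_mul]
theorem embOf_strictMono {N K : ℕ} (σ : SigmaNK N K) : StrictMono (embOf σ) :=
  (σ.1.orderEmbOfFin σ.2).strictMono

theorem embOf_injective {N K : ℕ} (σ : SigmaNK N K) : Function.Injective (embOf σ) :=
  (embOf_strictMono σ).injective

theorem embOf_mem {N K : ℕ} (σ : SigmaNK N K) (p : Fin N) : embOf σ p ∈ σ.1 :=
  Finset.orderEmbOfFin_mem _ _ _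

theorem posIn_embOf {N K : ℕ} (σ : SigmaNK N K) (p : Fin N) :
    posIn σ.1 (embOf σ p) = p.val := by
  rw [posIn, embOf, Finset.orderEmbOfFin_apply]
  exact (σ.1.sort_nodup (· ≤ ·)).idxOf_getElem _ _

theorem exists_pfin {N K : ℕ} (σ : SigmaNK N K) (k : Fin K) (hk : k ∈ σ.1) :
    ∃ p : Fin N, embOf σ p = k := by
  have := Finset.range_orderEmbOfFin σ.1 σ.2
  have hk' : (k : Fin K) ∈ Set.range (σ.1.orderEmbOfFin σ.2) := by
    rw [this]; exact hk
  obtain ⟨p, hp⟩ := hk'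
  exact ⟨p, hp⟩

def pfin {N K : ℕ} (σ : SigmaNK N K) (k : Fin K) (hk : k ∈ σ.1) : Fin N :=
  Classical.choose (exists_pfin σ k hk)

theorem pfin_spec {N K : ℕ} (σ : SigmaNK N K) (k : Fin K) (hk : k ∈ σ.1) :
    embOf σ (pfin σ k hk) = k := Classical.choose_spec (exists_pfin σ k hk)

theorem posIn_eq_pfin {N K : ℕ} (σ : SigmaNK N K) (k : Fin K) (hk : k ∈ σ.1) :
    posIn σ.1 k = (pfin σ k hk).val := by
  conv_lhs => rw [← pfin_spec σ k hk]
  exact posIn_embOf σ _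

theorem erase_card {N K : ℕ} (σ : SigmaNK N K) (k : Fin K) (hk : k ∈ σ.1) :
    (σ.1.erase k).card = N - 1 := by
  rw [Finset.card_erase_of_mem hk, σ.2]

theorem embOf_succAbove {n K : ℕ} (σ : SigmaNK (n+1) K) (k : Fin K) (hk : k ∈ σ.1) :
    (fun a : Fin n => embOf σ ((pfin σ k hk).succAbove a))
      = (σ.1.erase k).orderEmbOfFin (by rw [erase_card σ k hk]; rfl) := by
  refine Finset.orderEmbOfFin_unique _ ?_ ?_
  · intro a
    refine Finset.mem_erase.mpr ⟨?_, embOf_mem σ _⟩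
    intro hcontra
    have h2 : embOf σ ((pfin σ k hk).succAbove a) = embOf σ (pfin σ k hk) := by
      rw [hcontra, pfin_spec σ k hk]
    exact (pfin σ k hk).succAbove_ne a (embOf_injective σ h2)
  · exact (embOf_strictMono σ).comp (Fin.strictMono_succAbove _)
theorem slater_update_expand (n : ℕ) (f : Fin n → E3 → ℂ) (x : Fin n → E3) (i : Fin n)
    (w : E3 → ℂ) :
    (fun y => slater n f (Function.update x i y) * conj (w y)) =
      fun y => ∑ π : Equiv.Perm (Fin n),
        (((Real.sqrt (n.factorial) : ℂ))⁻¹ * ((Equiv.Perm.sign π : ℤ) : ℂ) *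
          ∏ b ∈ Finset.univ.erase i, f (π b) (x b)) * (f (π i) y * conj (w y)) := by
  funext y
  rw [slater, Matrix.det_apply']
  rw [Finset.mul_sum, Finset.sum_mul]
  refine Finset.sum_congr rfl fun π _ => ?_
  have hsplit : ∏ b, Matrix.of (fun a b => f a (Function.update x i y b)) (π b) b
      = f (π i) y * ∏ b ∈ Finset.univ.erase i, f (π b) (x b) := by
    rw [← Finset.mul_prod_erase Finset.univ _ (Finset.mem_univ i)]
    congr 1
    · simp [Matrix.of_apply]
    · refine Finset.prod_congr rfl fun b hb => ?_
      have hbi : b ≠ i := (Finset.mem_erase.mp hb).1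
      simp [Matrix.of_apply, Function.update_of_ne hbi]
  rw [hsplit]
  ring

theorem slater_update_integrable (Ω : Set E3) (n : ℕ) {f : Fin n → E3 → ℂ}
    (hf : ∀ a, MemLp (f a) 2 (mOm Ω)) (x : Fin n → E3) (i : Fin n)
    {w : E3 → ℂ} (hw : MemLp w 2 (mOm Ω)) :
    Integrable (fun y => slater n f (Function.update x i y) * conj (w y)) (mOm Ω) := by
  rw [slater_update_expand n f x i w]
  exact integrable_finset_sum _ fun π _ =>
    (my_integrable_mul_conj (hf (π i)) hw).const_mul _

theorem integral_slater_update (Ω : Set E3) (n : ℕ) {f : Fin n → E3 → ℂ}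
    (hf : ∀ a, MemLp (f a) 2 (mOm Ω)) (x : Fin n → E3) (i : Fin n)
    {w : E3 → ℂ} (hw : MemLp w 2 (mOm Ω)) :
    ∫ y, slater n f (Function.update x i y) * conj (w y) ∂(mOm Ω)
      = ∑ π : Equiv.Perm (Fin n),
        (((Real.sqrt (n.factorial) : ℂ))⁻¹ * ((Equiv.Perm.sign π : ℤ) : ℂ) *
          ∏ b ∈ Finset.univ.erase i, f (π b) (x b)) * ip2 Ω (f (π i)) w := by
  rw [show (fun y => slater n f (Function.update x i y) * conj (w y)) =
      fun y => ∑ π : Equiv.Perm (Fin n),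
        (((Real.sqrt (n.factorial) : ℂ))⁻¹ * ((Equiv.Perm.sign π : ℤ) : ℂ) *
          ∏ b ∈ Finset.univ.erase i, f (π b) (x b)) * (f (π i) y * conj (w y))
    from slater_update_expand n f x i w]
  rw [integral_finset_sum _ fun π _ => (my_integrable_mul_conj (hf (π i)) hw).const_mul _]
  exact Finset.sum_congr rfl fun π _ => by rw [MeasureTheory.integral_const_mul]; rfl
theorem det_updateRow_finset_sum {N : ℕ} (A : Matrix (Fin N) (Fin N) ℂ) (p : Fin N)
    (g : Fin N → (Fin N → ℂ)) (s : Finset (Fin N)) :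
    (A.updateRow p (∑ i ∈ s, g i)).det = ∑ i ∈ s, (A.updateRow p (g i)).det := by
  induction s using Finset.induction_on with
  | empty =>
      rw [Finset.sum_empty, Finset.sum_empty]
      exact Matrix.det_eq_zero_of_row_eq_zero p (fun j => by rw [Matrix.updateRow_self]; rfl)
  | insert _ _ ha ih =>
      rw [Finset.sum_insert ha, Finset.sum_insert ha, Matrix.det_updateRow_add, ih]

theorem dPhi_slaterSel (Ω : Set E3) (N K : ℕ) (Φ : Fin K → E3 → ℂ)
    (hm : ∀ m, MemLp (Φ m) 2 (mOm Ω))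
    (ho : ∀ i j, ip2 Ω (Φ i) (Φ j) = if i = j then 1 else 0)
    (σ : SigmaNK N K) (k : Fin K) (hk : k ∈ σ.1) (ζ : E3 → ℂ) (x : Fin N → E3) :
    dPhi Ω N (slaterSel N K Φ σ) (Φ k) ζ x
      = slater N (Function.update (fun a => Φ (embOf σ a)) (pfin σ k hk) ζ) x := by
  set p := pfin σ k hk with hp
  set M : Matrix (Fin N) (Fin N) ℂ := Matrix.of (fun a b => Φ (embOf σ a) (x b)) with hM
  set c : ℂ := ((Real.sqrt (N.factorial) : ℂ))⁻¹ with hc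
  have stepA : ∀ i : Fin N,
      (∫ y, slaterSel N K Φ σ (Function.update x i y) * conj (Φ k y) ∂(mOm Ω))
        = c * (M.updateRow p (Pi.single i 1)).det := by
    intro i
    rw [slaterSel]
    rw [integral_slater_update Ω N (fun a => hm (embOf σ a)) x i (hm k)]
    rw [Matrix.det_apply', Finset.mul_sum]
    refine Finset.sum_congr rfl fun π _ => ?_
    by_cases hpi : π i = p
    · have hek : embOf σ (π i) = k := by rw [hpi, hp, pfin_spec]
      rw [ho, if_pos hek]
      have hprod : ∏ b, (M.updateRow p (Pi.single i 1)) (π b) b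
          = ∏ b ∈ Finset.univ.erase i, Φ (embOf σ (π b)) (x b) := by
        rw [← Finset.mul_prod_erase Finset.univ _ (Finset.mem_univ i)]
        have h1 : (M.updateRow p (Pi.single i 1)) (π i) i = 1 := by
          rw [hpi, Matrix.updateRow_self, Pi.single_eq_same]
        rw [h1, one_mul]
        refine Finset.prod_congr rfl fun b hb => ?_
        have hbi : b ≠ i := (Finset.mem_erase.mp hb).1
        have hbp : π b ≠ p := fun hcontra => hbi (π.injective (by rw [hcontra, hpi]))
        rw [Matrix.updateRow_ne hbp]
        rfl
      rw [hprod]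
      ring
    · have hek : embOf σ (π i) ≠ k := by
        intro hcontra
        exact hpi (embOf_injective σ (by rw [hcontra, ← pfin_spec σ k hk]))
      rw [ho, if_neg hek]
      have hzero : ∏ b, (M.updateRow p (Pi.single i 1)) (π b) b = 0 := by
        refine Finset.prod_eq_zero (Finset.mem_univ (π.symm p)) ?_
        have h1 : π (π.symm p) = p := π.apply_symm_apply p
        have h2 : π.symm p ≠ i := by
          intro hcontra
          exact hpi (by rw [← hcontra, h1])
        rw [h1, Matrix.updateRow_self, Pi.single_eq_of_ne h2]
      rw [hzero]
      ring
  have stepB : dPhi Ω N (slaterSel N K Φ σ) (Φ k) ζ x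
      = c * ∑ i : Fin N, ζ (x i) * (M.updateRow p (Pi.single i 1)).det := by
    rw [dPhi, Finset.mul_sum]
    refine Finset.sum_congr rfl fun i _ => ?_
    rw [stepA i]
    ring
  have hrow : (fun b => ζ (x b)) = ∑ i : Fin N, ζ (x i) • (Pi.single i (1:ℂ) : Fin N → ℂ) := by
    funext b
    rw [Finset.sum_apply]
    simp [Pi.single_apply]
  have stepC : ∑ i : Fin N, ζ (x i) * (M.updateRow p (Pi.single i 1)).det
      = (M.updateRow p (fun b => ζ (x b))).det := by
    rw [hrow, det_updateRow_finset_sum]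
    refine Finset.sum_congr rfl fun i _ => ?_
    rw [Matrix.det_updateRow_smul]
  have stepD : slater N (Function.update (fun a => Φ (embOf σ a)) p ζ) x
      = c * (M.updateRow p (fun b => ζ (x b))).det := by
    rw [slater]
    congr 1
    congr 1
    ext a b
    by_cases hap : a = p
    · subst hap
      simp [Matrix.updateRow_self]
    · simp [Matrix.updateRow_ne hap, Function.update_of_ne hap, hM]
  rw [stepB, stepC, ← stepD]
section GramComp

variable (Ω : Set E3) {K : ℕ} (Φ : Fin K → E3 → ℂ)

theorem gram_apply {n : ℕ} (f g : Fin n → E3 → ℂ) (a b : Fin n) :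
    gram Ω n f g a b = ip2 Ω (f a) (g b) := rfl

theorem sigma_ne_exists {N : ℕ} (σ τ : SigmaNK N K) (hne : σ ≠ τ) :
    ∃ e ∈ σ.1, e ∉ τ.1 := by
  by_contra hcon
  push_neg at hcon
  have hsub : σ.1 ⊆ τ.1 := fun e he => hcon e he
  have : σ.1 = τ.1 := Finset.eq_of_subset_of_card_le hsub (by rw [σ.2, τ.2])
  exact hne (Subtype.ext this)

theorem gram_det_bas_bas {N : ℕ}
    (ho : ∀ i j, ip2 Ω (Φ i) (Φ j) = if i = j then 1 else 0) (σ τ : SigmaNK N K) :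
    (gram Ω N (fun a => Φ (embOf σ a)) (fun a => Φ (embOf τ a))).det
      = if σ = τ then 1 else 0 := by
  by_cases hστ : σ = τ
  · subst hστ
    rw [if_pos rfl]
    have h1 : gram Ω N (fun a => Φ (embOf σ a)) (fun a => Φ (embOf σ a)) = 1 := by
      ext a b
      rw [gram_apply, ho, Matrix.one_apply]
      by_cases hab : a = b
      · simp [hab]
      · rw [if_neg hab, if_neg (fun hcontra => hab (embOf_injective σ hcontra))]
    rw [h1, Matrix.det_one]
  · rw [if_neg hστ]
    obtain ⟨e, he, hent⟩ := sigma_ne_exists σ τ hστ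
    obtain ⟨a0, ha0⟩ := exists_pfin σ e he
    refine Matrix.det_eq_zero_of_row_eq_zero a0 fun b => ?_
    rw [gram_apply, ho, if_neg]
    intro hcontra
    rw [ha0] at hcontra
    exact hent (hcontra ▸ embOf_mem τ b)

theorem gram_det_repl_bas {N : ℕ}
    (ho : ∀ i j, ip2 Ω (Φ i) (Φ j) = if i = j then 1 else 0)
    (σ τ : SigmaNK N K) (p : Fin N) {η : E3 → ℂ} (hη : ∀ m, ip2 Ω η (Φ m) = 0) :
    (gram Ω N (Function.update (fun a => Φ (embOf σ a)) p η) (fun a => Φ (embOf τ a))).det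
      = 0 := by
  refine Matrix.det_eq_zero_of_row_eq_zero p fun b => ?_
  rw [gram_apply, Function.update_self, hη]

theorem gram_det_repl_repl {n : ℕ} {σ τ : SigmaNK (n+1) K}
    (ho : ∀ i j, ip2 Ω (Φ i) (Φ j) = if i = j then 1 else 0)
    {k l : Fin K} (hk : k ∈ σ.1) (hl : l ∈ τ.1)
    {η ξ : E3 → ℂ} (hη : ∀ m, ip2 Ω η (Φ m) = 0) (hξ : ∀ m, ip2 Ω ξ (Φ m) = 0) :
    (gram Ω (n+1) (Function.update (fun a => Φ (embOf σ a)) (pfin σ k hk) η)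
        (Function.update (fun a => Φ (embOf τ a)) (pfin τ l hl) ξ)).det
      = if σ.1.erase k = τ.1.erase l then
          (-1 : ℂ) ^ (posIn σ.1 k + posIn τ.1 l) * ip2 Ω η ξ
        else 0 := by
  set p := pfin σ k hk with hpdef
  set q := pfin τ l hl with hqdef
  set G := gram Ω (n+1) (Function.update (fun a => Φ (embOf σ a)) p η)
      (Function.update (fun a => Φ (embOf τ a)) q ξ) with hGdef
  have hGpq : G p q = ip2 Ω η ξ := by
    rw [hGdef, gram_apply, Function.update_self, Function.update_self]
  have hGpb : ∀ b, b ≠ q → G p b = 0 := by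
    intro b hb
    rw [hGdef, gram_apply, Function.update_self, Function.update_of_ne hb, hη]
  have hGaq : ∀ a, a ≠ p → G a q = 0 := by
    intro a ha
    rw [hGdef, gram_apply, Function.update_of_ne ha, Function.update_self,
      ip2_conj_symm, hξ, map_zero]
  have hGab : ∀ a b, a ≠ p → b ≠ q → G a b
      = if embOf σ a = embOf τ b then 1 else 0 := by
    intro a b ha hb
    rw [hGdef, gram_apply, Function.update_of_ne ha, Function.update_of_ne hb, ho]
  by_cases hcase : σ.1.erase k = τ.1.erase l
  · rw [if_pos hcase]
    rw [Matrix.det_succ_row G p]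
    rw [Finset.sum_eq_single q]
    · have hminor : G.submatrix p.succAbove q.succAbove = 1 := by
        have hce : (τ.1.erase l).card = n := by
          rw [Finset.card_erase_of_mem hl, τ.2]
          rfl
        have hfσ : (fun a : Fin n => embOf σ (p.succAbove a))
            = (τ.1.erase l).orderEmbOfFin hce := by
          refine Finset.orderEmbOfFin_unique _ ?_
            ((embOf_strictMono σ).comp (Fin.strictMono_succAbove _))
          intro a
          rw [← hcase]
          refine Finset.mem_erase.mpr ⟨?_, embOf_mem σ _⟩
          intro hcontra
          have h2 : embOf σ (p.succAbove a) = embOf σ p := by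
            rw [hcontra, hpdef, pfin_spec σ k hk]
          exact p.succAbove_ne a (embOf_injective σ h2)
        have hfτ : (fun a : Fin n => embOf τ (q.succAbove a))
            = (τ.1.erase l).orderEmbOfFin hce := by
          refine Finset.orderEmbOfFin_unique _ ?_
            ((embOf_strictMono τ).comp (Fin.strictMono_succAbove _))
          intro a
          refine Finset.mem_erase.mpr ⟨?_, embOf_mem τ _⟩
          intro hcontra
          have h2 : embOf τ (q.succAbove a) = embOf τ q := by
            rw [hcontra, hqdef, pfin_spec τ l hl]
          exact q.succAbove_ne a (embOf_injective τ h2)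
        ext a b
        rw [Matrix.submatrix_apply,
          hGab _ _ (p.succAbove_ne a) (q.succAbove_ne b), Matrix.one_apply]
        have hema : embOf σ (p.succAbove a) = (τ.1.erase l).orderEmbOfFin hce a :=
          congrFun hfσ a
        have hemb : embOf τ (q.succAbove b) = (τ.1.erase l).orderEmbOfFin hce b :=
          congrFun hfτ b
        rw [hema, hemb]
        by_cases hab : a = b
        · simp [hab]
        · rw [if_neg hab, if_neg
            (fun hcontra => hab (((τ.1.erase l).orderEmbOfFin hce).injective hcontra))]
      rw [hminor, Matrix.det_one, hGpq]
      have hsign : ((-1 : ℂ)) ^ ((p : ℕ) + (q : ℕ))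
          = (-1 : ℂ) ^ (posIn σ.1 k + posIn τ.1 l) := by
        rw [posIn_eq_pfin σ k hk, posIn_eq_pfin τ l hl, ← hpdef, ← hqdef]
      rw [hsign]
      ring
    · intro b _ hb
      rw [hGpb b hb]
      ring
    · intro hq
      exact absurd (Finset.mem_univ q) hq
  · rw [if_neg hcase]
    have hcards : (σ.1.erase k).card = (τ.1.erase l).card := by
      rw [Finset.card_erase_of_mem hk, Finset.card_erase_of_mem hl, σ.2, τ.2]
    have hex : ∃ e ∈ σ.1.erase k, e ∉ τ.1.erase l := by
      by_contra hcon
      push_neg at hcon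
      exact hcase (Finset.eq_of_subset_of_card_le (fun e he => hcon e he) (le_of_eq hcards.symm))
    obtain ⟨e, he, hent⟩ := hex
    obtain ⟨henk, heσ⟩ := Finset.mem_erase.mp he
    obtain ⟨a0, ha0⟩ := exists_pfin σ e heσ
    have ha0p : a0 ≠ p := by
      intro hcontra
      rw [hcontra, hpdef, pfin_spec σ k hk] at ha0
      exact henk ha0.symm
    refine Matrix.det_eq_zero_of_row_eq_zero a0 fun b => ?_
    by_cases hbq : b = q
    · rw [hbq]
      exact hGaq a0 ha0p
    · rw [hGab a0 b ha0p hbq, if_neg]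
      intro hcontra
      rw [ha0] at hcontra
      refine hent (Finset.mem_erase.mpr ⟨?_, hcontra ▸ embOf_mem τ b⟩)
      intro hel
      have : embOf τ b = embOf τ q := by
        rw [← hcontra, hel, hqdef, pfin_spec τ l hl]
      exact hbq (embOf_injective τ this)

end GramComp
theorem dPhi_slaterSel_notmem (Ω : Set E3) (N K : ℕ) (Φ : Fin K → E3 → ℂ)
    (hm : ∀ m, MemLp (Φ m) 2 (mOm Ω))
    (ho : ∀ i j, ip2 Ω (Φ i) (Φ j) = if i = j then 1 else 0)
    (σ : SigmaNK N K) (k : Fin K) (hk : k ∉ σ.1) (ζ : E3 → ℂ) (x : Fin N → E3) :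
    dPhi Ω N (slaterSel N K Φ σ) (Φ k) ζ x = 0 := by
  rw [dPhi]
  refine Finset.sum_eq_zero fun i _ => ?_
  have hint : (∫ y, slaterSel N K Φ σ (Function.update x i y) * conj (Φ k y) ∂(mOm Ω)) = 0 := by
    rw [slaterSel, integral_slater_update Ω N (fun a => hm (embOf σ a)) x i (hm k)]
    refine Finset.sum_eq_zero fun π _ => ?_
    rw [ho, if_neg, mul_zero]
    intro hcontra
    exact hk (hcontra ▸ embOf_mem σ (π i))
  rw [show (∫ y, slaterSel N K Φ σ (Function.update x i y) * conj (Φ k y) ∂(mOm Ω))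
    = _ from rfl] at hint
  rw [hint, mul_zero]

theorem dPhi_mc (Ω : Set E3) (N K : ℕ) (Φ : Fin K → E3 → ℂ)
    (hm : ∀ m, MemLp (Φ m) 2 (mOm Ω))
    (ho : ∀ i j, ip2 Ω (Φ i) (Φ j) = if i = j then 1 else 0)
    (C : SigmaNK N K → ℂ) (k : Fin K) (ζ : E3 → ℂ) (x : Fin N → E3) :
    dPhi Ω N (mc N K C Φ) (Φ k) ζ x
      = ∑ σ : SigmaNK N K, C σ *
          (if hk : k ∈ σ.1 then
            slater N (Function.update (fun a => Φ (embOf σ a)) (pfin σ k hk) ζ) x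
          else 0) := by
  have hlin : dPhi Ω N (mc N K C Φ) (Φ k) ζ x
      = ∑ σ : SigmaNK N K, C σ * dPhi Ω N (slaterSel N K Φ σ) (Φ k) ζ x := by
    rw [dPhi]
    have hinner : ∀ i : Fin N,
        (∫ y, mc N K C Φ (Function.update x i y) * conj (Φ k y) ∂(mOm Ω))
          = ∑ σ : SigmaNK N K, C σ *
            ∫ y, slaterSel N K Φ σ (Function.update x i y) * conj (Φ k y) ∂(mOm Ω) := by
      intro i
      have hexp : (fun y => mc N K C Φ (Function.update x i y) * conj (Φ k y))
          = fun y => ∑ σ : SigmaNK N K,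
            C σ * (slaterSel N K Φ σ (Function.update x i y) * conj (Φ k y)) := by
        funext y
        rw [mc, Finset.sum_mul]
        exact Finset.sum_congr rfl fun σ _ => by ring
      have hI : ∀ σ ∈ (Finset.univ : Finset (SigmaNK N K)), Integrable
          (fun y => C σ * (slaterSel N K Φ σ (Function.update x i y) * conj (Φ k y)))
          (mOm Ω) := fun σ _ =>
        (show Integrable (fun y => slaterSel N K Φ σ (Function.update x i y) * conj (Φ k y))
            (mOm Ω) from slater_update_integrable Ω N
          (f := fun a => Φ (embOf σ a)) (fun a => hm (embOf σ a)) x i (hm k)).const_mul _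
      rw [hexp, integral_finset_sum _ hI]
      exact Finset.sum_congr rfl fun σ _ => by rw [MeasureTheory.integral_const_mul]
    have hterm : ∀ i : Fin N, ζ (x i) *
        (∫ y, mc N K C Φ (Function.update x i y) * conj (Φ k y) ∂(mOm Ω))
        = ∑ σ : SigmaNK N K, C σ * (ζ (x i) *
            ∫ y, slaterSel N K Φ σ (Function.update x i y) * conj (Φ k y) ∂(mOm Ω)) := by
      intro i
      rw [hinner i, Finset.mul_sum]
      exact Finset.sum_congr rfl fun σ _ => by ring
    rw [Finset.sum_congr rfl fun i _ => hterm i, Finset.sum_comm]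
    refine Finset.sum_congr rfl fun σ _ => ?_
    rw [dPhi, Finset.mul_sum]
  rw [hlin]
  refine Finset.sum_congr rfl fun σ _ => ?_
  congr 1
  by_cases hk : k ∈ σ.1
  · rw [dif_pos hk]
    exact dPhi_slaterSel Ω N K Φ hm ho σ k hk ζ x
  · rw [dif_neg hk]
    exact dPhi_slaterSel_notmem Ω N K Φ hm ho σ k hk ζ x

theorem rows_update_memℒp (Ω : Set E3) {n K : ℕ} (Φ : Fin K → E3 → ℂ)
    (hm : ∀ m, MemLp (Φ m) 2 (mOm Ω)) (σ : SigmaNK n K) (p : Fin n)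
    {η : E3 → ℂ} (hη : MemLp η 2 (mOm Ω)) :
    ∀ a, MemLp ((Function.update (fun a => Φ (embOf σ a)) p η) a) 2 (mOm Ω) := by
  intro a
  rcases eq_or_ne a p with h | h
  · subst h; rw [Function.update_self]; exact hη
  · rw [Function.update_of_ne h]; exact hm _


/-- under the full-rank assumption the differential of π at (C₀,Φ₀) is
injective on allowed variations: if the tangent vector vanishes then δC = 0 and δφ = 0. -/
theorem dpi_injective (Ω : Set E3) (hΩ : IsOpen Ω) (N K : ℕ)
    (hN : 1 ≤ N) (hNK : N ≤ K)
    (C0 : SigmaNK N K → ℂ) (hC0 : ∑ σ : SigmaNK N K, ‖C0 σ‖ ^ 2 = 1)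
    (Φ0 : Fin K → E3 → ℂ) (hΦ0 : OrthoSys Ω Φ0)
    (hG : IsUnit (GammaM N K C0))
    (δC : SigmaNK N K → ℂ) (δφ : Fin K → E3 → ℂ)
    (hδφ : ∀ k, MemLp (δφ k) 2 (mOm Ω))
    (hperp : ∀ k m : Fin K, ip2 Ω (δφ k) (Φ0 m) = 0)
    (heq : (fun x => (∑ σ : SigmaNK N K, δC σ * slaterSel N K Φ0 σ x) +
        (1 / (N : ℂ)) * ∑ k : Fin K, dPhi Ω N (mc N K C0 Φ0) (Φ0 k) (δφ k) x)
        =ᵐ[mN Ω N] 0) :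
    δC = 0 ∧ ∀ k : Fin K, δφ k =ᵐ[mOm Ω] 0 := by
  obtain ⟨n, rfl⟩ : ∃ n, N = n + 1 := ⟨N - 1, (Nat.succ_pred_eq_of_pos hN).symm⟩
  obtain ⟨hm, ho⟩ := hΦ0
  have hNc : ((n + 1 : ℕ) : ℂ) ≠ 0 := Nat.cast_ne_zero.mpr (Nat.succ_ne_zero n)
  -- the pairing identity
  have hpair : ∀ g : Fin (n+1) → E3 → ℂ, (∀ a, MemLp (g a) 2 (mOm Ω)) →
      (∑ σ : SigmaNK (n+1) K, δC σ *
          (gram Ω (n+1) (fun a => Φ0 (embOf σ a)) g).det) +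
      (1 / ((n+1 : ℕ) : ℂ)) * (∑ k : Fin K, ∑ σ : SigmaNK (n+1) K, C0 σ *
        (if hk : k ∈ σ.1 then
          (gram Ω (n+1) (Function.update (fun a => Φ0 (embOf σ a)) (pfin σ k hk) (δφ k)) g).det
        else 0)) = 0 := by
    intro g hg
    have hintA : ∀ σ : SigmaNK (n+1) K, Integrable
        (fun x => slater (n+1) (fun a => Φ0 (embOf σ a)) x * conj (slater (n+1) g x))
        (mN Ω (n+1)) := fun σ =>
      slater_pair_integrable Ω (n+1) (fun a => hm (embOf σ a)) hg
    have hintB : ∀ (k : Fin K) (σ : SigmaNK (n+1) K), Integrable (fun x =>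
        (if hk : k ∈ σ.1 then
          slater (n+1) (Function.update (fun a => Φ0 (embOf σ a)) (pfin σ k hk) (δφ k)) x
        else 0) * conj (slater (n+1) g x)) (mN Ω (n+1)) := by
      intro k σ
      by_cases hk : k ∈ σ.1
      · simp only [dif_pos hk]
        exact slater_pair_integrable Ω (n+1)
          (rows_update_memℒp Ω Φ0 hm σ (pfin σ k hk) (hδφ k)) hg
      · simp only [dif_neg hk, zero_mul]
        exact integrable_zero _ _ _
    have hzero : (∫ x, ((∑ σ : SigmaNK (n+1) K, δC σ * slaterSel (n+1) K Φ0 σ x) +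
        (1 / ((n+1 : ℕ) : ℂ)) * ∑ k : Fin K, dPhi Ω (n+1) (mc (n+1) K C0 Φ0) (Φ0 k) (δφ k) x) *
          conj (slater (n+1) g x) ∂(mN Ω (n+1))) = 0 := by
      have hae : (fun x => ((∑ σ : SigmaNK (n+1) K, δC σ * slaterSel (n+1) K Φ0 σ x) +
          (1 / ((n+1 : ℕ) : ℂ)) * ∑ k : Fin K,
            dPhi Ω (n+1) (mc (n+1) K C0 Φ0) (Φ0 k) (δφ k) x) *
            conj (slater (n+1) g x)) =ᵐ[mN Ω (n+1)] 0 := by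
        filter_upwards [heq] with x hx
        have hx' : (∑ σ : SigmaNK (n+1) K, δC σ * slaterSel (n+1) K Φ0 σ x) +
            (1 / ((n+1 : ℕ) : ℂ)) * ∑ k : Fin K,
              dPhi Ω (n+1) (mc (n+1) K C0 Φ0) (Φ0 k) (δφ k) x = 0 := hx
        show ((∑ σ : SigmaNK (n+1) K, δC σ * slaterSel (n+1) K Φ0 σ x) +
            (1 / ((n+1 : ℕ) : ℂ)) * ∑ k : Fin K,
              dPhi Ω (n+1) (mc (n+1) K C0 Φ0) (Φ0 k) (δφ k) x) *
            conj (slater (n+1) g x) = 0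
        rw [hx', zero_mul]
      rw [integral_congr_ae hae]
      exact integral_zero _ _
    have hexpand : (fun x => ((∑ σ : SigmaNK (n+1) K, δC σ * slaterSel (n+1) K Φ0 σ x) +
        (1 / ((n+1 : ℕ) : ℂ)) * ∑ k : Fin K, dPhi Ω (n+1) (mc (n+1) K C0 Φ0) (Φ0 k) (δφ k) x) *
          conj (slater (n+1) g x)) =
        fun x => (∑ σ : SigmaNK (n+1) K, δC σ *
            (slater (n+1) (fun a => Φ0 (embOf σ a)) x * conj (slater (n+1) g x))) +
          (1 / ((n+1 : ℕ) : ℂ)) * (∑ k : Fin K, ∑ σ : SigmaNK (n+1) K, C0 σ *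
            ((if hk : k ∈ σ.1 then
              slater (n+1) (Function.update (fun a => Φ0 (embOf σ a)) (pfin σ k hk) (δφ k)) x
            else 0) * conj (slater (n+1) g x))) := by
      funext x
      rw [show (∑ k : Fin K, dPhi Ω (n+1) (mc (n+1) K C0 Φ0) (Φ0 k) (δφ k) x)
          = ∑ k : Fin K, ∑ σ : SigmaNK (n+1) K, C0 σ *
            (if hk : k ∈ σ.1 then
              slater (n+1) (Function.update (fun a => Φ0 (embOf σ a)) (pfin σ k hk) (δφ k)) x
            else 0)
        from Finset.sum_congr rfl fun k _ => dPhi_mc Ω (n+1) K Φ0 hm ho C0 k (δφ k) x]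
      rw [add_mul, Finset.sum_mul]
      congr 1
      · refine Finset.sum_congr rfl fun σ _ => ?_
        simp only [slaterSel]
        ring
      · rw [mul_assoc]
        congr 1
        rw [Finset.sum_mul]
        refine Finset.sum_congr rfl fun k _ => ?_
        rw [Finset.sum_mul]
        refine Finset.sum_congr rfl fun σ _ => by ring
    rw [hexpand] at hzero
    rw [integral_add (integrable_finset_sum _ fun σ _ => (hintA σ).const_mul _)
      ((integrable_finset_sum _ fun k _ => integrable_finset_sum _ fun σ _ =>
        (hintB k σ).const_mul _).const_mul _)] at hzero
    rw [integral_finset_sum _ fun σ _ => (hintA σ).const_mul _] at hzero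
    rw [MeasureTheory.integral_const_mul] at hzero
    rw [integral_finset_sum _ fun k _ => integrable_finset_sum _ fun σ _ =>
      (hintB k σ).const_mul _] at hzero
    rw [Finset.sum_congr rfl fun k _ => integral_finset_sum _ fun σ _ =>
      (hintB k σ).const_mul _] at hzero
    have hA : ∀ σ : SigmaNK (n+1) K,
        (∫ x, δC σ * (slater (n+1) (fun a => Φ0 (embOf σ a)) x * conj (slater (n+1) g x))
          ∂(mN Ω (n+1)))
        = δC σ * (gram Ω (n+1) (fun a => Φ0 (embOf σ a)) g).det := by
      intro σ
      rw [MeasureTheory.integral_const_mul]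
      congr 1
      exact ipN_slater Ω (n+1) (fun a => hm (embOf σ a)) hg
    have hB : ∀ (k : Fin K) (σ : SigmaNK (n+1) K),
        (∫ x, C0 σ * ((if hk : k ∈ σ.1 then
            slater (n+1) (Function.update (fun a => Φ0 (embOf σ a)) (pfin σ k hk) (δφ k)) x
          else 0) * conj (slater (n+1) g x)) ∂(mN Ω (n+1)))
        = C0 σ * (if hk : k ∈ σ.1 then
            (gram Ω (n+1) (Function.update (fun a => Φ0 (embOf σ a)) (pfin σ k hk) (δφ k))
              g).det else 0) := by
      intro k σ
      rw [MeasureTheory.integral_const_mul]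
      congr 1
      by_cases hk : k ∈ σ.1
      · simp only [dif_pos hk]
        exact ipN_slater Ω (n+1) (rows_update_memℒp Ω Φ0 hm σ (pfin σ k hk) (hδφ k)) hg
      · simp only [dif_neg hk, zero_mul]
        exact integral_zero _ _
    rw [Finset.sum_congr rfl fun σ _ => hA σ] at hzero
    rw [Finset.sum_congr rfl fun k _ => Finset.sum_congr rfl fun σ _ => hB k σ] at hzero
    exact hzero
  -- step 1 : δC = 0
  have hδC : δC = 0 := by
    funext τ
    have hp := hpair (fun a => Φ0 (embOf τ a)) (fun a => hm _)
    have h1 : (∑ σ : SigmaNK (n+1) K, δC σ *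
        (gram Ω (n+1) (fun a => Φ0 (embOf σ a)) (fun a => Φ0 (embOf τ a))).det) = δC τ := by
      rw [Finset.sum_congr rfl fun σ _ => by
        rw [gram_det_bas_bas Ω Φ0 ho σ τ]]
      simp [Finset.sum_ite_eq']
    have h2 : (∑ k : Fin K, ∑ σ : SigmaNK (n+1) K, C0 σ *
        (if hk : k ∈ σ.1 then
          (gram Ω (n+1) (Function.update (fun a => Φ0 (embOf σ a)) (pfin σ k hk) (δφ k))
            (fun a => Φ0 (embOf τ a))).det else 0)) = 0 := by
      refine Finset.sum_eq_zero fun k _ => Finset.sum_eq_zero fun σ _ => ?_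
      by_cases hk : k ∈ σ.1
      · rw [dif_pos hk, gram_det_repl_bas Ω Φ0 ho σ τ _ (fun m => hperp k m), mul_zero]
      · rw [dif_neg hk, mul_zero]
    rw [h1, h2, mul_zero, add_zero] at hp
    exact hp
  -- step 2
  have hstep2 : ∀ (τ : SigmaNK (n+1) K) (l : Fin K), l ∈ τ.1 → ∀ j : Fin K,
      (∑ k : Fin K, ∑ σ : SigmaNK (n+1) K, C0 σ *
        (if hk : k ∈ σ.1 then
          (if σ.1.erase k = τ.1.erase l then
            (-1 : ℂ) ^ (posIn σ.1 k + posIn τ.1 l) * ip2 Ω (δφ k) (δφ j)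
          else 0) else 0)) = 0 := by
    intro τ l hl j
    have hp := hpair (Function.update (fun a => Φ0 (embOf τ a)) (pfin τ l hl) (δφ j))
      (rows_update_memℒp Ω Φ0 hm τ (pfin τ l hl) (hδφ j))
    have h1 : (∑ σ : SigmaNK (n+1) K, δC σ *
        (gram Ω (n+1) (fun a => Φ0 (embOf σ a))
          (Function.update (fun a => Φ0 (embOf τ a)) (pfin τ l hl) (δφ j))).det) = 0 := by
      refine Finset.sum_eq_zero fun σ _ => ?_
      rw [hδC]
      simp
    rw [h1, zero_add] at hp
    have h2 := (mul_eq_zero.mp hp).resolve_left (by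
      simp only [one_div, ne_eq, inv_eq_zero]
      exact hNc)
    have heqsum : (∑ k : Fin K, ∑ σ : SigmaNK (n+1) K, C0 σ *
        (if hk : k ∈ σ.1 then
          (gram Ω (n+1) (Function.update (fun a => Φ0 (embOf σ a)) (pfin σ k hk) (δφ k))
            (Function.update (fun a => Φ0 (embOf τ a)) (pfin τ l hl) (δφ j))).det else 0))
        = (∑ k : Fin K, ∑ σ : SigmaNK (n+1) K, C0 σ *
          (if hk : k ∈ σ.1 then
            (if σ.1.erase k = τ.1.erase l then
              (-1 : ℂ) ^ (posIn σ.1 k + posIn τ.1 l) * ip2 Ω (δφ k) (δφ j)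
            else 0) else 0)) := by
      refine Finset.sum_congr rfl fun k _ => Finset.sum_congr rfl fun σ _ => ?_
      congr 1
      by_cases hk : k ∈ σ.1
      · rw [dif_pos hk, dif_pos hk,
          gram_det_repl_repl Ω Φ0 ho hk hl (fun m => hperp k m) (fun m => hperp j m)]
      · rw [dif_neg hk, dif_neg hk]
    rw [← heqsum]
    exact h2
  -- step 3 : gamma identity
  have key : ∀ l j : Fin K,
      (∑ k : Fin K, gamma1 (n+1) K C0 k l * ip2 Ω (δφ k) (δφ j)) = 0 := by
    intro l j
    have hexp : (∑ k : Fin K, gamma1 (n+1) K C0 k l * ip2 Ω (δφ k) (δφ j))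
        = ∑ k : Fin K, ∑ σ : SigmaNK (n+1) K, ∑ τ : SigmaNK (n+1) K,
          (if k ∈ σ.1 ∧ l ∈ τ.1 ∧ σ.1.erase k = τ.1.erase l then
            (-1 : ℂ) ^ (posIn σ.1 k + posIn τ.1 l) * C0 σ * conj (C0 τ)
          else 0) * ip2 Ω (δφ k) (δφ j) := by
      refine Finset.sum_congr rfl fun k _ => ?_
      rw [gamma1, Finset.sum_mul]
      exact Finset.sum_congr rfl fun σ _ => by rw [Finset.sum_mul]
    rw [hexp]
    have hswap : (∑ k : Fin K, ∑ σ : SigmaNK (n+1) K, ∑ τ : SigmaNK (n+1) K,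
          (if k ∈ σ.1 ∧ l ∈ τ.1 ∧ σ.1.erase k = τ.1.erase l then
            (-1 : ℂ) ^ (posIn σ.1 k + posIn τ.1 l) * C0 σ * conj (C0 τ)
          else 0) * ip2 Ω (δφ k) (δφ j))
        = ∑ τ : SigmaNK (n+1) K, ∑ k : Fin K, ∑ σ : SigmaNK (n+1) K,
          (if k ∈ σ.1 ∧ l ∈ τ.1 ∧ σ.1.erase k = τ.1.erase l then
            (-1 : ℂ) ^ (posIn σ.1 k + posIn τ.1 l) * C0 σ * conj (C0 τ)
          else 0) * ip2 Ω (δφ k) (δφ j) := by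
      rw [Finset.sum_congr rfl fun k (_ : k ∈ Finset.univ) => Finset.sum_comm]
      exact Finset.sum_comm
    rw [hswap]
    refine Finset.sum_eq_zero fun τ _ => ?_
    by_cases hl : l ∈ τ.1
    · have hinner : (∑ k : Fin K, ∑ σ : SigmaNK (n+1) K,
          (if k ∈ σ.1 ∧ l ∈ τ.1 ∧ σ.1.erase k = τ.1.erase l then
            (-1 : ℂ) ^ (posIn σ.1 k + posIn τ.1 l) * C0 σ * conj (C0 τ)
          else 0) * ip2 Ω (δφ k) (δφ j))
          = conj (C0 τ) * (∑ k : Fin K, ∑ σ : SigmaNK (n+1) K, C0 σ *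
            (if hk : k ∈ σ.1 then
              (if σ.1.erase k = τ.1.erase l then
                (-1 : ℂ) ^ (posIn σ.1 k + posIn τ.1 l) * ip2 Ω (δφ k) (δφ j)
              else 0) else 0)) := by
        rw [Finset.mul_sum]
        refine Finset.sum_congr rfl fun k _ => ?_
        rw [Finset.mul_sum]
        refine Finset.sum_congr rfl fun σ _ => ?_
        by_cases hk : k ∈ σ.1
        · by_cases he : σ.1.erase k = τ.1.erase l
          · rw [if_pos ⟨hk, hl, he⟩, dif_pos hk, if_pos he]
            ring
          · rw [if_neg (fun hcon => he hcon.2.2), dif_pos hk, if_neg he]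
            ring
        · rw [if_neg (fun hcon => hk hcon.1), dif_neg hk]
          ring
      rw [hinner, hstep2 τ l hl j, mul_zero]
    · refine Finset.sum_eq_zero fun k _ => Finset.sum_eq_zero fun σ _ => ?_
      rw [if_neg (fun hcon => hl hcon.2.1), zero_mul]
  -- step 4 : matrix conclusion
  have hAM : (GammaM (n+1) K C0)ᴴ * (Matrix.of fun k j => ip2 Ω (δφ k) (δφ j)) = 0 := by
    ext l j
    have hentry : ((GammaM (n+1) K C0)ᴴ * (Matrix.of fun k j => ip2 Ω (δφ k) (δφ j))) l j
        = ∑ k : Fin K, gamma1 (n+1) K C0 k l * ip2 Ω (δφ k) (δφ j) := by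
      rw [Matrix.mul_apply]
      refine Finset.sum_congr rfl fun k _ => ?_
      congr 1
      rw [Matrix.conjTranspose_apply, GammaM]
      simp only [Matrix.of_apply, Complex.star_def, Complex.conj_conj]
    rw [hentry, key l j, Matrix.zero_apply]
  have hdetH : IsUnit ((GammaM (n+1) K C0)ᴴ).det := by
    rw [Matrix.det_conjTranspose]
    exact ((Matrix.isUnit_iff_isUnit_det _).mp hG).star
  have hMz : (Matrix.of fun k j => ip2 Ω (δφ k) (δφ j)) = 0 := by
    calc (Matrix.of fun k j => ip2 Ω (δφ k) (δφ j))
        = 1 * (Matrix.of fun k j => ip2 Ω (δφ k) (δφ j)) := (Matrix.one_mul _).symm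
      _ = (((GammaM (n+1) K C0)ᴴ)⁻¹ * (GammaM (n+1) K C0)ᴴ) *
            (Matrix.of fun k j => ip2 Ω (δφ k) (δφ j)) := by
          rw [Matrix.nonsing_inv_mul _ hdetH]
      _ = ((GammaM (n+1) K C0)ᴴ)⁻¹ * ((GammaM (n+1) K C0)ᴴ *
            (Matrix.of fun k j => ip2 Ω (δφ k) (δφ j))) := Matrix.mul_assoc _ _ _
      _ = 0 := by rw [hAM, Matrix.mul_zero]
  refine ⟨hδC, fun k => ?_⟩
  have hk0 : ip2 Ω (δφ k) (δφ k) = 0 := by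
    have := congrArg (fun A : Matrix (Fin K) (Fin K) ℂ => A k k) hMz
    simpa using this
  have hre : Integrable (fun x => Complex.normSq (δφ k x)) (mOm Ω) := by
    have hint := my_integrable_mul_conj (hδφ k) (hδφ k)
    have hr : (fun x => Complex.normSq (δφ k x)) = fun x => (δφ k x * conj (δφ k x)).re :=
      funext fun x => by rw [Complex.mul_conj, Complex.ofReal_re]
    rw [hr]
    exact hint.re
  have h0 : (∫ x, Complex.normSq (δφ k x) ∂(mOm Ω)) = 0 := by
    have hrw : ip2 Ω (δφ k) (δφ k)
        = ((∫ x, Complex.normSq (δφ k x) ∂(mOm Ω) : ℝ) : ℂ) := by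
      rw [ip2, integral_congr_ae (ae_of_all _ fun x =>
        show δφ k x * conj (δφ k x) = ((Complex.normSq (δφ k x) : ℝ) : ℂ) from
          Complex.mul_conj _)]
      exact integral_ofReal
    rw [hrw] at hk0
    exact_mod_cast hk0
  have hae0 := (integral_eq_zero_iff_of_nonneg
    (fun x => Complex.normSq_nonneg (δφ k x)) hre).mp h0
  filter_upwards [hae0] with x hx
  have hx' : Complex.normSq (δφ k x) = 0 := hx
  exact Complex.normSq_eq_zero.mp hx'
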